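/- Let M, N be positive integers, let x ∈ ℂ^M, let h_1, …, h_N > 0 be reals, let R_1, …, R_N ∈ ℂ^{M×M} and Π ∈ ℂ^{M×M} be Hermitian positive definite, and let Γ_1, …, Γ_N ∈ ℂ^{M×M} satisfy Σ_{n=1}^N Γ_n = I. Set X := Σ_{n=1}^N h_n R_n. Then the following majorization inequality holds (all quadratic forms and traces appearing are real): ln det X + xᴴ X⁻¹ x ≤ ln det Π + Σ_{n=1}^N h_n · Re tr(R_n Π⁻¹) − M + xᴴ (Σ_{n=1}^N h_n⁻¹ Γ_nᴴ R_n⁻¹ Γ_n) x. -/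

import Mathlib

open Matrix ComplexOrder

-- helper: det of PD complex matrix is a positive real
lemma aux_det_re {m : Type*} [Fintype m] [DecidableEq m] {A : Matrix m m ℂ} (hA : A.PosDef) :
    A.det = (A.det.re : ℂ) ∧ 0 < A.det.re := by
  have h := hA.det_pos
  rw [Complex.lt_def] at h
  obtain ⟨h1, h2⟩ := h
  refine ⟨Complex.ext rfl ?_, by simpa using h1⟩
  simpa using h2.symm

-- trace of Hermitian = sum of eigenvalues
lemma aux_trace_eq {m : Type*} [Fintype m] [DecidableEq m] {A : Matrix m m ℂ}
    (hA : A.IsHermitian) : A.trace = ((∑ i, hA.eigenvalues i : ℝ) : ℂ) := by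
  have := hA.trace_eq_sum_eigenvalues
  have h2 : A.trace = (diagonal (RCLike.ofReal ∘ hA.eigenvalues) : Matrix m m ℂ).trace := by
    rw [this, trace_diagonal]; simp
  rw [h2, trace_diagonal]
  push_cast
  rfl

-- log det ≤ trace - card for PD
lemma aux_logdet_le {m : Type*} [Fintype m] [DecidableEq m] {A : Matrix m m ℂ}
    (hA : A.PosDef) : Real.log A.det.re ≤ A.trace.re - Fintype.card m := by
  have hev := hA.eigenvalues_pos
  have hdet : A.det.re = ∏ i, hA.1.eigenvalues i := by
    rw [hA.1.det_eq_prod_eigenvalues]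
    norm_cast
  have htr : A.trace.re = ∑ i, hA.1.eigenvalues i := by
    rw [aux_trace_eq hA.1]; norm_cast
  rw [hdet, htr, Real.log_prod (fun i _ => (hev i).ne')]
  calc ∑ i, Real.log (hA.1.eigenvalues i) ≤ ∑ i, (hA.1.eigenvalues i - 1) :=
        Finset.sum_le_sum fun i _ => Real.log_le_sub_one_of_pos (hev i)
    _ = _ := by rw [Finset.sum_sub_distrib]; simp [Finset.card_univ]

-- smul by positive real keeps PosDef
lemma aux_smul_posdef {m : Type*} [Fintype m] {A : Matrix m m ℂ} (hA : A.PosDef)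
    {c : ℝ} (hc : 0 < c) : ((c : ℂ) • A).PosDef := by
  refine Matrix.PosDef.of_dotProduct_mulVec_pos ?_ ?_
  · unfold Matrix.IsHermitian
    rw [conjTranspose_smul, hA.1.eq]
    congr 1
    simp
  · intro x hx
    have h1 := hA.dotProduct_mulVec_pos hx
    have : star x ⬝ᵥ ((c : ℂ) • A) *ᵥ x = (c : ℂ) * (star x ⬝ᵥ A *ᵥ x) := by
      rw [smul_mulVec, dotProduct_smul, smul_eq_mul]
    rw [this]
    exact mul_pos (Complex.zero_lt_real.mpr hc) h1

lemma aux_sum_posdef {m : Type*} [Fintype m] {N : ℕ} (hN : 0 < N)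
    (f : Fin N → Matrix m m ℂ) (hf : ∀ n, (f n).PosDef) : (∑ n, f n).PosDef := by
  refine Matrix.PosDef.of_dotProduct_mulVec_pos ?_ ?_
  · refine Finset.sum_induction f _ (fun a b ha hb => ha.add hb) isHermitian_zero
      (fun n _ => (hf n).1)
  · intro x hx
    have : star x ⬝ᵥ (∑ n, f n) *ᵥ x = ∑ n, star x ⬝ᵥ (f n) *ᵥ x := by
      induction (Finset.univ : Finset (Fin N)) using Finset.induction with
      | empty => simp
      | insert _ _ hni ih => simp [Finset.sum_insert hni, add_mulVec, dotProduct_add, ih]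
    rw [this]
    exact Finset.sum_pos (fun n _ => (hf n).dotProduct_mulVec_pos hx) (Finset.univ_nonempty_iff.mpr (Fin.pos_iff_nonempty.mp hN))

lemma aux_sum_fromBlocks {m N : ℕ} (A B C D : Fin N → Matrix (Fin m) (Fin m) ℂ) :
    ∑ n, fromBlocks (A n) (B n) (C n) (D n) =
      fromBlocks (∑ n, A n) (∑ n, B n) (∑ n, C n) (∑ n, D n) := by
  ext i j
  cases i <;> cases j <;>
    simp [Finset.sum_apply, fromBlocks, Matrix.sum_apply]

lemma aux_sum_psd {m : Type*} [Fintype m] {N : ℕ}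
    (f : Fin N → Matrix m m ℂ) (hf : ∀ n, (f n).PosSemidef) : (∑ n, f n).PosSemidef := by
  classical
  refine Finset.sum_induction f _ (fun a b ha hb => ha.add hb) PosSemidef.zero
    (fun n _ => hf n)

-- conjugation of PosDef by an invertible Hermitian matrix
lemma aux_conj_posdef {m : Type*} [Fintype m] [DecidableEq m]
    {X P : Matrix m m ℂ} (hX : X.PosDef) (hP : P.IsHermitian) (hdet : IsUnit P.det) :
    (P * X * P).PosDef := by
  refine Matrix.PosDef.of_dotProduct_mulVec_pos ?_ ?_
  · unfold Matrix.IsHermitian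
    rw [conjTranspose_mul, conjTranspose_mul, hX.1.eq, hP.eq, mul_assoc]
  · intro x hx
    have hy : P *ᵥ x ≠ 0 := by
      intro hcon
      apply hx
      have := congrArg (fun v => P⁻¹ *ᵥ v) hcon
      simpa [mulVec_mulVec, Matrix.nonsing_inv_mul P hdet] using this
    have key : star x ⬝ᵥ (P * X * P) *ᵥ x = star (P *ᵥ x) ⬝ᵥ X *ᵥ (P *ᵥ x) := by
      rw [← mulVec_mulVec, ← mulVec_mulVec, dotProduct_mulVec, star_mulVec, hP.eq]
    rw [key]
    exact hX.dotProduct_mulVec_pos hy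

theorem stmt_16 (M N : ℕ) (hM : 0 < M) (hN : 0 < N)
    (x : Fin M → ℂ)
    (h : Fin N → ℝ) (hh : ∀ n, 0 < h n)
    (R : Fin N → Matrix (Fin M) (Fin M) ℂ) (hR : ∀ n, (R n).PosDef)
    (Pi0 : Matrix (Fin M) (Fin M) ℂ) (hPi0 : Pi0.PosDef)
    (Γ : Fin N → Matrix (Fin M) (Fin M) ℂ) (hΓ : ∑ n, Γ n = 1)
    (X : Matrix (Fin M) (Fin M) ℂ) (hX : X = ∑ n, (h n : ℂ) • R n) :
    Real.log X.det.re + (star x ⬝ᵥ X⁻¹.mulVec x).re ≤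
      Real.log Pi0.det.re + (∑ n, h n * ((R n * Pi0⁻¹).trace).re) - M +
        (star x ⬝ᵥ
          (∑ n, ((h n : ℂ))⁻¹ • ((Γ n)ᴴ * (R n)⁻¹ * Γ n)).mulVec x).re := by
  -- X is positive definite
  have hXpd : X.PosDef := by
    rw [hX]; exact aux_sum_posdef hN _ (fun n => aux_smul_posdef (hR n) (hh n))
  haveI : Invertible X := hXpd.isUnit.invertible
  set S : Matrix (Fin M) (Fin M) ℂ := ∑ n, ((h n : ℂ))⁻¹ • ((Γ n)ᴴ * (R n)⁻¹ * Γ n) with hS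
  -- Part 2 : quadratic form majorization
  have hblocks : ∀ n : Fin N,
      (fromBlocks ((h n : ℂ) • R n) (Γ n) ((Γ n)ᴴ)
        (((h n : ℂ))⁻¹ • ((Γ n)ᴴ * (R n)⁻¹ * Γ n))).PosSemidef := by
    intro n
    have hpd := aux_smul_posdef (hR n) (hh n)
    haveI := hpd.isUnit.invertible
    rw [PosDef.fromBlocks₁₁ _ _ hpd]
    have hcne : (h n : ℂ) ≠ 0 := by exact_mod_cast (hh n).ne'
    haveI : Invertible (h n : ℂ) := invertibleOfNonzero hcne
    have hinv : ((h n : ℂ) • R n)⁻¹ = ((h n : ℂ))⁻¹ • (R n)⁻¹ := by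
      rw [_root_.Matrix.inv_smul (A := R n) (h n : ℂ) ((Matrix.isUnit_iff_isUnit_det _).mp (hR n).isUnit), invOf_eq_inv]
    rw [hinv]
    have : (Γ n)ᴴ * (((h n : ℂ))⁻¹ • (R n)⁻¹) * Γ n
        = ((h n : ℂ))⁻¹ • ((Γ n)ᴴ * (R n)⁻¹ * Γ n) := by
      rw [mul_smul_comm, smul_mul_assoc]
    rw [this, sub_self]
    exact PosSemidef.zero
  have hsum : (fromBlocks X 1 1 S).PosSemidef := by
    have := aux_sum_psd _ hblocks
    rwa [aux_sum_fromBlocks, ← hX, hΓ, ← hS,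
      show (∑ n, (Γ n)ᴴ) = (1 : Matrix (Fin M) (Fin M) ℂ) by
        rw [← conjTranspose_sum]  -- may not exist
        rw [hΓ, conjTranspose_one]] at this
  have hpsd : (S - X⁻¹).PosSemidef := by
    have h1 : ((1 : Matrix (Fin M) (Fin M) ℂ))ᴴ = 1 := conjTranspose_one
    have := (PosDef.fromBlocks₁₁ (1 : Matrix (Fin M) (Fin M) ℂ) S hXpd).mp
      (by rwa [h1])
    simpa using this
  have hquad : (star x ⬝ᵥ X⁻¹.mulVec x).re ≤ (star x ⬝ᵥ S.mulVec x).re := by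
    have h0 := hpsd.dotProduct_mulVec_nonneg x
    rw [Complex.le_def] at h0
    have := h0.1
    rw [sub_mulVec, dotProduct_sub, Complex.sub_re] at this
    simpa using sub_nonneg.mp (by simpa using this)
  -- Part 1 : log det majorization
  obtain ⟨S0, hS0h, hS0sq⟩ : ∃ S0 : Matrix (Fin M) (Fin M) ℂ, S0.IsHermitian ∧ S0 * S0 = Pi0 := by
    open scoped MatrixOrder in
    exact ⟨CFC.sqrt Pi0, (CFC.sqrt_nonneg Pi0).posSemidef.1,
      CFC.sqrt_mul_sqrt_self Pi0 hPi0.posSemidef.nonneg⟩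
  have hPidet := hPi0.det_pos
  have hS0det : IsUnit S0.det := by
    have : S0.det * S0.det = Pi0.det := by rw [← det_mul, hS0sq]
    have hne : S0.det ≠ 0 := by
      intro hcon
      rw [hcon, mul_zero] at this
      exact hPi0.det_pos.ne' this.symm
    exact hne.isUnit
  have hS0invh : (S0⁻¹).IsHermitian := by
    unfold Matrix.IsHermitian
    rw [conjTranspose_nonsing_inv, hS0h.eq]
  have hS0invdet : IsUnit (S0⁻¹).det := by
    rw [det_nonsing_inv]
    exact isUnit_ringInverse.mpr hS0det
  set A := S0⁻¹ * X * S0⁻¹ with hAdef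
  have hApd : A.PosDef := aux_conj_posdef hXpd hS0invh hS0invdet
  -- det X = det Pi0 * det A
  have hXfromA : X = S0 * A * S0 := by
    rw [hAdef, ← mul_assoc, ← mul_assoc, Matrix.mul_nonsing_inv _ hS0det, one_mul,
      mul_assoc, Matrix.nonsing_inv_mul _ hS0det, mul_one]
  have hdetprod : X.det = Pi0.det * A.det := by
    have hp : Pi0.det = S0.det * S0.det := by rw [← det_mul, hS0sq]
    rw [hXfromA, det_mul, det_mul, hp]
    ring
  obtain ⟨hPire, hPirepos⟩ := aux_det_re hPi0
  obtain ⟨hAre, hArepos⟩ := aux_det_re hApd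
  have hdetXre : X.det.re = Pi0.det.re * A.det.re := by
    rw [hdetprod, hPire, hAre]
    norm_cast
  have hlogX : Real.log X.det.re = Real.log Pi0.det.re + Real.log A.det.re := by
    rw [hdetXre, Real.log_mul hPirepos.ne' hArepos.ne']
  -- trace A = trace (X * Pi0⁻¹)
  have htrA : A.trace = (X * Pi0⁻¹).trace := by
    have hmm : S0⁻¹ * S0⁻¹ = Pi0⁻¹ := by rw [← Matrix.mul_inv_rev, hS0sq]
    rw [hAdef, trace_mul_comm, ← mul_assoc, hmm, trace_mul_comm]
  have htrX : (X * Pi0⁻¹).trace.re = ∑ n, h n * ((R n * Pi0⁻¹).trace).re := by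
    rw [hX, Finset.sum_mul]
    have : ∀ n : Fin N, ((h n : ℂ) • R n) * Pi0⁻¹ = (h n : ℂ) • (R n * Pi0⁻¹) := fun n =>
      smul_mul_assoc _ _ _
    simp_rw [this, trace_sum, trace_smul, Complex.re_sum]
    congr 1
    ext n
    rw [smul_eq_mul, Complex.re_ofReal_mul]
  -- conclude part 1
  have hpart1 : Real.log X.det.re ≤
      Real.log Pi0.det.re + (∑ n, h n * ((R n * Pi0⁻¹).trace).re) - M := by
    have := aux_logdet_le hApd
    rw [Fintype.card_fin] at this
    rw [hlogX, htrA, htrX] at *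
    linarith [this]
  linarith [hquad, hpart1]
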